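/- arXiv:1009.3295 — 6 statements merged into one kernel-verified Lean document; each statement's English description precedes it below -/
import Mathlib

section
/- The ring H_ℤ with generators a_n, b_n (n ≥ 1) and defining relations a_n b_m = b_m a_n + b_{m-1} a_{n-1}, a_n a_m = a_m a_n, b_n b_m = b_m b_n (where a_0 = b_0 = 1) is free as an abelian group with basis given by the monomials b_{m_1}⋯b_{m_k} a_{n_1}⋯a_{n_r} with 1 ≤ m_1 ≤ ⋯ ≤ m_k and 1 ≤ n_1 ≤ ⋯ ≤ n_r. -/
/-!
The integral Heisenberg ring `H_ℤ`, presented by generators `a n, b n` (`n ≥ 1`)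
with conventions `a 0 = b 0 = 1` and relations
`a n * b m = b m * a n + b (m-1) * a (n-1)`, `a n * a m = a m * a n`,
`b n * b m = b m * b n`, is free as an abelian group with basis the monomials
`b_{m₁} ⋯ b_{m_k} · a_{n₁} ⋯ a_{n_r}` with `1 ≤ m₁ ≤ ⋯ ≤ m_k` and
`1 ≤ n₁ ≤ ⋯ ≤ n_r`.
-/

/-- Generators: `A n` represents `a (n+1)`, `B n` represents `b (n+1)`. -/
inductive HeisGen : Type
  | A : ℕ → HeisGen
  | B : ℕ → HeisGen

noncomputable def aF : ℕ → FreeAlgebra ℤ HeisGen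
  | 0 => 1
  | n + 1 => FreeAlgebra.ι ℤ (HeisGen.A n)

noncomputable def bF : ℕ → FreeAlgebra ℤ HeisGen
  | 0 => 1
  | n + 1 => FreeAlgebra.ι ℤ (HeisGen.B n)

/-- The defining relations of the integral Heisenberg ring. -/
inductive HeisRel : FreeAlgebra ℤ HeisGen → FreeAlgebra ℤ HeisGen → Prop
  | ab (n m : ℕ) :
      HeisRel (aF (n + 1) * bF (m + 1)) (bF (m + 1) * aF (n + 1) + bF m * aF n)
  | aa (n m : ℕ) : HeisRel (aF (n + 1) * aF (m + 1)) (aF (m + 1) * aF (n + 1))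
  | bb (n m : ℕ) : HeisRel (bF (n + 1) * bF (m + 1)) (bF (m + 1) * bF (n + 1))

/-- The integral Heisenberg ring `H_ℤ`. -/
noncomputable abbrev HeisZ : Type := RingQuot HeisRel

noncomputable def ha (n : ℕ) : HeisZ := RingQuot.mkRingHom HeisRel (aF n)

noncomputable def hb (n : ℕ) : HeisZ := RingQuot.mkRingHom HeisRel (bF n)

/-- Index for the normal-form monomials: a pair of weakly increasing lists of
positive integers `(m₁ ≤ ⋯ ≤ m_k, n₁ ≤ ⋯ ≤ n_r)`. -/
def NormalPair (p : List ℕ × List ℕ) : Prop :=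
  p.1.Pairwise (· ≤ ·) ∧ p.2.Pairwise (· ≤ ·) ∧
    (∀ x ∈ p.1, 1 ≤ x) ∧ (∀ x ∈ p.2, 1 ≤ x)

/-- The monomial `b_{m₁} ⋯ b_{m_k} · a_{n₁} ⋯ a_{n_r}`. -/
noncomputable def normalMonomial (p : List ℕ × List ℕ) : HeisZ :=
  (p.1.map hb).prod * (p.2.map ha).prod


abbrev MS : Type := Multiset ℕ × Multiset ℕ
abbrev Mfree : Type := MS →₀ ℤ

noncomputable def dd (p : MS) : Mfree := Finsupp.single p 1

noncomputable def Cop (m : ℕ) : Mfree →ₗ[ℤ] Mfree :=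
  Finsupp.lmapDomain ℤ ℤ (fun p => (m ::ₘ p.1, p.2))

noncomputable def B0 : ℕ → Mfree →ₗ[ℤ] Mfree
  | 0 => LinearMap.id
  | m + 1 => Cop (m + 1)

lemma Cop_dd (m : ℕ) (p : MS) : Cop m (dd p) = dd (m ::ₘ p.1, p.2) := by
  simp [Cop, dd, Finsupp.lmapDomain, Finsupp.mapDomain_single]

lemma Cop_comm (m k : ℕ) (v : Mfree) : Cop m (Cop k v) = Cop k (Cop m v) := by
  simp only [Cop, Finsupp.lmapDomain_apply, ← Finsupp.mapDomain_comp]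
  congr 1
  funext p
  simp [Function.comp, Multiset.cons_swap]

lemma B0_Cop_comm (j k : ℕ) (v : Mfree) : B0 j (Cop k v) = Cop k (B0 j v) := by
  cases j with
  | zero => rfl
  | succ j => exact Cop_comm _ _ _

lemma B0_B0_comm (j k : ℕ) (v : Mfree) : B0 j (B0 k v) = B0 k (B0 j v) := by
  cases k with
  | zero => rfl
  | succ k => exact B0_Cop_comm _ _ _

noncomputable def Aelt : ℕ → List ℕ → Multiset ℕ → Mfree
  | 0, l, t => dd (↑l, t)
  | n + 1, [], t => dd (0, (n + 1) ::ₘ t)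
  | n + 1, m :: l, t => Cop m (Aelt (n + 1) l t) + B0 (m - 1) (Aelt n l t)
  termination_by n l _ => (l.length, n)

lemma Aelt_zero (l : List ℕ) (t : Multiset ℕ) : Aelt 0 l t = dd (↑l, t) := by
  simp [Aelt]

lemma Aelt_succ_nil (n : ℕ) (t : Multiset ℕ) : Aelt (n+1) [] t = dd (0, (n+1) ::ₘ t) := by
  simp [Aelt]

lemma Aelt_succ_cons (n m : ℕ) (l : List ℕ) (t : Multiset ℕ) :
    Aelt (n+1) (m :: l) t = Cop m (Aelt (n+1) l t) + B0 (m-1) (Aelt n l t) := by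
  rw [Aelt]

lemma Aelt_zero_cons (m : ℕ) (l : List ℕ) (t : Multiset ℕ) :
    Aelt 0 (m :: l) t = Cop m (Aelt 0 l t) := by
  rw [Aelt_zero, Aelt_zero, Cop_dd]
  rfl

lemma Aelt_swap (x y : ℕ) (l : List ℕ) (n : ℕ) (t : Multiset ℕ) :
    Aelt n (x :: y :: l) t = Aelt n (y :: x :: l) t := by
  cases n with
  | zero =>
      rw [Aelt_zero, Aelt_zero]
      simp [← Multiset.cons_coe, Multiset.cons_swap]
  | succ n =>
      cases n with
      | zero =>
          simp only [Aelt_succ_cons, Aelt_zero_cons, map_add]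
          rw [Cop_comm x y, B0_Cop_comm (x-1) y, B0_Cop_comm (y-1) x]
          abel
      | succ n =>
          simp only [Aelt_succ_cons, map_add]
          rw [Cop_comm x y, B0_Cop_comm (x-1) y, B0_Cop_comm (y-1) x,
            B0_B0_comm (x-1) (y-1)]
          abel

lemma Aelt_perm {l₁ l₂ : List ℕ} (h : l₁.Perm l₂) :
    ∀ n t, Aelt n l₁ t = Aelt n l₂ t := by
  induction h with
  | nil => intro n t; rfl
  | cons a h ih =>
      intro n t
      cases n with
      | zero =>
          rw [Aelt_zero_cons, Aelt_zero_cons, ih]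
      | succ n =>
          rw [Aelt_succ_cons, Aelt_succ_cons, ih, ih]
  | swap a b l => intro n t; exact Aelt_swap _ _ _ _ _
  | trans _ _ ih₁ ih₂ => intro n t; rw [ih₁, ih₂]

noncomputable def AeltM (n : ℕ) (p : MS) : Mfree :=
  Quotient.liftOn p.1 (fun l => Aelt n l p.2) (fun _ _ h => Aelt_perm h n p.2)

lemma AeltM_coe (n : ℕ) (l : List ℕ) (t : Multiset ℕ) : AeltM n (↑l, t) = Aelt n l t := rfl

noncomputable def Aop : ℕ → Mfree →ₗ[ℤ] Mfree
  | 0 => LinearMap.id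
  | n + 1 => (Finsupp.lift Mfree ℤ MS) (AeltM (n + 1))

lemma Aop_dd (n : ℕ) (l : List ℕ) (t : Multiset ℕ) :
    Aop n (dd (↑l, t)) = Aelt n l t := by
  cases n with
  | zero => rw [Aelt_zero]; rfl
  | succ n =>
      show ((Finsupp.lift Mfree ℤ MS) (AeltM (n+1))) (Finsupp.single (↑l, t) 1) = _
      rw [Finsupp.lift_apply, Finsupp.sum_single_index] <;> simp [AeltM_coe]

/-- extensionality on basis vectors `dd` -/
lemma Mfree_ext {f g : Mfree →ₗ[ℤ] Mfree} (h : ∀ p, f (dd p) = g (dd p)) : f = g := by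
  apply Finsupp.lhom_ext
  intro p z
  have : (Finsupp.single p z : Mfree) = z • dd p := by
    simp [dd, Finsupp.smul_single]
  rw [this, map_smul, map_smul, h]

lemma Aop_Cop (n a : ℕ) (v : Mfree) :
    Aop (n + 1) (Cop a v) = Cop a (Aop (n + 1) v) + B0 (a - 1) (Aop n v) := by
  have : (Aop (n+1)).comp (Cop a) =
      (Cop a).comp (Aop (n+1)) + (B0 (a-1)).comp (Aop n) := by
    apply Mfree_ext
    rintro ⟨s, t⟩
    induction s using Quotient.inductionOn with
    | h l =>
        rw [Multiset.quot_mk_to_coe]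
        show Aop (n+1) (Cop a (dd (↑l, t))) = _
        rw [Cop_dd]
        show Aop (n+1) (dd (↑(a :: l), t)) = _
        rw [Aop_dd, Aelt_succ_cons]
        simp only [LinearMap.add_apply, LinearMap.coe_comp, Function.comp_apply]
        rw [Aop_dd, Aop_dd]
  exact DFunLike.congr_fun this v

noncomputable def Dop : ℕ → Mfree →ₗ[ℤ] Mfree
  | 0 => 0
  | j + 1 => B0 j

lemma Aop_B0 (n j : ℕ) (v : Mfree) :
    Aop (n + 1) (B0 j v) = B0 j (Aop (n + 1) v) + Dop j (Aop n v) := by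
  cases j with
  | zero => simp [B0, Dop]
  | succ j => exact Aop_Cop n (j+1) v

lemma Aop_Aelt_comm : ∀ (l : List ℕ) (n m : ℕ) (t : Multiset ℕ),
    Aop n (Aelt m l t) = Aop m (Aelt n l t) := by
  intro l
  induction l with
  | nil =>
      intro n m t
      cases n with
      | zero => rw [Aelt_zero, Aop_dd]; rfl
      | succ n =>
        cases m with
        | zero => rw [Aelt_zero, Aop_dd]; rfl
        | succ m =>
            rw [Aelt_succ_nil, Aelt_succ_nil]
            show Aop (n+1) (dd (↑([] : List ℕ), (m+1) ::ₘ t)) =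
              Aop (m+1) (dd (↑([] : List ℕ), (n+1) ::ₘ t))
            rw [Aop_dd, Aop_dd, Aelt_succ_nil, Aelt_succ_nil, Multiset.cons_swap]
  | cons a l ih =>
      intro n m t
      cases n with
      | zero =>
          rw [Aelt_zero]
          show Aelt m (a :: l) t = Aop m (Aop 0 (dd (↑(a :: l), t)))
          rw [show Aop 0 (dd (↑(a :: l), t)) = dd (↑(a :: l), t) from rfl, Aop_dd]
      | succ n =>
        cases m with
        | zero =>
            rw [Aelt_zero (a :: l)]
            show Aop (n+1) (dd (↑(a :: l), t)) = _
            rw [Aop_dd]; rfl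
        | succ m =>
            rw [Aelt_succ_cons, Aelt_succ_cons, map_add, map_add,
              Aop_Cop, Aop_Cop, Aop_B0, Aop_B0,
              ih (n+1) (m+1), ih n (m+1), ih (n+1) m, ih n m]
            abel

noncomputable def gEnd : HeisGen → Module.End ℤ Mfree
  | .A n => Aop (n + 1)
  | .B n => Cop (n + 1)

noncomputable def fAlg : FreeAlgebra ℤ HeisGen →ₐ[ℤ] Module.End ℤ Mfree :=
  FreeAlgebra.lift ℤ gEnd

lemma fAlg_aF (n : ℕ) : fAlg (aF n) = Aop n := by
  cases n with
  | zero => show fAlg 1 = _; rw [map_one]; rfl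
  | succ n => show fAlg (FreeAlgebra.ι ℤ (HeisGen.A n)) = _; rw [fAlg, FreeAlgebra.lift_ι_apply]; rfl

lemma fAlg_bF (m : ℕ) : fAlg (bF m) = B0 m := by
  cases m with
  | zero => show fAlg 1 = _; rw [map_one]; rfl
  | succ m => show fAlg (FreeAlgebra.ι ℤ (HeisGen.B m)) = _; rw [fAlg, FreeAlgebra.lift_ι_apply]; rfl

lemma fAlg_rel : ∀ ⦃x y : FreeAlgebra ℤ HeisGen⦄, HeisRel x y → fAlg x = fAlg y := by
  intro x y h
  cases h with
  | ab n m =>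
      simp only [map_mul, map_add, fAlg_aF, fAlg_bF]
      apply Mfree_ext (f := Aop (n+1) * B0 (m+1))
      rintro ⟨s, t⟩
      induction s using Quotient.inductionOn with
      | h l =>
          rw [Multiset.quot_mk_to_coe]
          show Aop (n+1) (B0 (m+1) (dd (↑l, t))) =
            B0 (m+1) (Aop (n+1) (dd (↑l, t))) + B0 m (Aop n (dd (↑l, t)))
          rw [show B0 (m+1) = Cop (m+1) from rfl, Cop_dd]
          show Aop (n+1) (dd (↑((m+1) :: l), t)) = _
          rw [Aop_dd, Aelt_succ_cons, Aop_dd, Aop_dd]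
          rfl
  | aa n m =>
      simp only [map_mul, fAlg_aF]
      apply Mfree_ext (f := Aop (n+1) * Aop (m+1))
      rintro ⟨s, t⟩
      induction s using Quotient.inductionOn with
      | h l =>
          rw [Multiset.quot_mk_to_coe]
          show Aop (n+1) (Aop (m+1) (dd (↑l, t))) = Aop (m+1) (Aop (n+1) (dd (↑l, t)))
          rw [Aop_dd, Aop_dd, Aop_Aelt_comm]
  | bb n m =>
      simp only [map_mul, fAlg_bF]
      apply Mfree_ext (f := B0 (n+1) * B0 (m+1))
      rintro ⟨s, t⟩
      show Cop (n+1) (Cop (m+1) _) = Cop (m+1) (Cop (n+1) _)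
      rw [Cop_comm]

noncomputable def rho : HeisZ →ₐ[ℤ] Module.End ℤ Mfree :=
  RingQuot.liftAlgHom ℤ ⟨fAlg, fAlg_rel⟩

lemma rho_mk (x : FreeAlgebra ℤ HeisGen) :
    rho (RingQuot.mkRingHom HeisRel x) = fAlg x := by
  rw [← RingQuot.mkAlgHom_coe ℤ HeisRel]
  exact RingQuot.liftAlgHom_mkAlgHom_apply ℤ _ _ _

lemma rho_ha (n : ℕ) : rho (ha n) = Aop n := by rw [ha, rho_mk, fAlg_aF]
lemma rho_hb (m : ℕ) : rho (hb m) = B0 m := by rw [hb, rho_mk, fAlg_bF]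

noncomputable def phi : HeisZ →ₗ[ℤ] Mfree where
  toFun x := rho x (dd (0, 0))
  map_add' x y := by simp [map_add]
  map_smul' z x := by simp [map_smul]

lemma ha_zero : ha 0 = 1 := by
  show RingQuot.mkRingHom HeisRel 1 = 1
  exact map_one _

lemma hb_zero : hb 0 = 1 := by
  show RingQuot.mkRingHom HeisRel 1 = 1
  exact map_one _

lemma rho_aprod : ∀ (as : List ℕ), (∀ x ∈ as, 1 ≤ x) → ∀ t : Multiset ℕ,
    rho ((as.map ha).prod) (dd (0, t)) = dd (0, ↑as + t) := by
  intro as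
  induction as with
  | nil => intro _ t; simp [map_one]
  | cons n as ih =>
      intro h t
      obtain ⟨k, rfl⟩ : ∃ k, n = k + 1 :=
        ⟨n - 1, by have := h n List.mem_cons_self; omega⟩
      rw [List.map_cons, List.prod_cons, map_mul, Module.End.mul_apply, rho_ha,
        ih (fun x hx => h x (List.mem_cons_of_mem _ hx)) t]
      show Aop (k+1) (dd (↑([] : List ℕ), ↑as + t)) = _
      rw [Aop_dd, Aelt_succ_nil, ← Multiset.cons_coe, Multiset.cons_add]

lemma rho_bprod : ∀ (ms : List ℕ), (∀ x ∈ ms, 1 ≤ x) → ∀ (s t : Multiset ℕ),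
    rho ((ms.map hb).prod) (dd (s, t)) = dd (↑ms + s, t) := by
  intro ms
  induction ms with
  | nil => intro _ s t; simp [map_one]
  | cons m ms ih =>
      intro h s t
      obtain ⟨k, rfl⟩ : ∃ k, m = k + 1 :=
        ⟨m - 1, by have := h m List.mem_cons_self; omega⟩
      rw [List.map_cons, List.prod_cons, map_mul, Module.End.mul_apply, rho_hb,
        ih (fun x hx => h x (List.mem_cons_of_mem _ hx)) s t]
      show Cop (k+1) (dd (↑ms + s, t)) = _
      rw [Cop_dd, ← Multiset.cons_coe, Multiset.cons_add]

lemma phi_normalMonomial {p : List ℕ × List ℕ} (hp : NormalPair p) :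
    phi (normalMonomial p) = dd (↑p.1, ↑p.2) := by
  obtain ⟨ms, as⟩ := p
  obtain ⟨-, -, h1, h2⟩ := hp
  show rho ((ms.map hb).prod * (as.map ha).prod) (dd (0, 0)) = _
  rw [map_mul, Module.End.mul_apply, rho_aprod as h2 0, rho_bprod ms h1]
  simp

noncomputable abbrev NP := {p : List ℕ × List ℕ // NormalPair p}

def emb (p : NP) : MS := (↑p.1.1, ↑p.1.2)

lemma emb_injective : Function.Injective emb := by
  rintro ⟨⟨m1, a1⟩, hp⟩ ⟨⟨m2, a2⟩, hq⟩ h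
  simp only [emb, Prod.mk.injEq] at h
  have p1 : m1.Perm m2 := Multiset.coe_eq_coe.mp h.1
  have p2 : a1.Perm a2 := Multiset.coe_eq_coe.mp h.2
  exact Subtype.ext (Prod.ext
    (List.Perm.eq_of_pairwise' hp.1 hq.1 p1)
    (List.Perm.eq_of_pairwise' hp.2.1 hq.2.1 p2))

lemma nm_linearIndependent :
    LinearIndependent ℤ (fun p : NP => normalMonomial p.1) := by
  apply LinearIndependent.of_comp phi
  have h1 : LinearIndependent ℤ (fun q : MS => (Finsupp.single q 1 : Mfree)) := by
    have := (Finsupp.basisSingleOne (ι := MS) (R := ℤ)).linearIndependent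
    rwa [Finsupp.coe_basisSingleOne] at this
  have h2 := h1.comp emb emb_injective
  have heq : (⇑phi ∘ fun p : NP => normalMonomial p.1) =
      ((fun q : MS => (Finsupp.single q 1 : Mfree)) ∘ emb) := by
    funext p
    show phi (normalMonomial p.1) = _
    rw [phi_normalMonomial p.2]
    rfl
  rw [heq]
  exact h2

/- ## Spanning -/

lemma nm_def (ms as : List ℕ) :
    normalMonomial (ms, as) = (ms.map hb).prod * (as.map ha).prod := rfl

lemma hb_comm (m k : ℕ) : hb m * hb k = hb k * hb m := by
  cases m with
  | zero => rw [hb_zero, one_mul, mul_one]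
  | succ m =>
    cases k with
    | zero => rw [hb_zero, one_mul, mul_one]
    | succ k =>
        show RingQuot.mkRingHom HeisRel (bF (m+1)) * RingQuot.mkRingHom HeisRel (bF (k+1)) =
          RingQuot.mkRingHom HeisRel (bF (k+1)) * RingQuot.mkRingHom HeisRel (bF (m+1))
        rw [← map_mul, ← map_mul, RingQuot.mkRingHom_rel (HeisRel.bb m k)]

lemma ha_comm (m k : ℕ) : ha m * ha k = ha k * ha m := by
  cases m with
  | zero => rw [ha_zero, one_mul, mul_one]
  | succ m =>
    cases k with
    | zero => rw [ha_zero, one_mul, mul_one]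
    | succ k =>
        show RingQuot.mkRingHom HeisRel (aF (m+1)) * RingQuot.mkRingHom HeisRel (aF (k+1)) =
          RingQuot.mkRingHom HeisRel (aF (k+1)) * RingQuot.mkRingHom HeisRel (aF (m+1))
        rw [← map_mul, ← map_mul, RingQuot.mkRingHom_rel (HeisRel.aa m k)]

lemma ha_hb_rel (n m : ℕ) :
    ha (n+1) * hb (m+1) = hb (m+1) * ha (n+1) + hb m * ha n := by
  show RingQuot.mkRingHom HeisRel (aF (n+1)) * RingQuot.mkRingHom HeisRel (bF (m+1)) =
    RingQuot.mkRingHom HeisRel (bF (m+1)) * RingQuot.mkRingHom HeisRel (aF (n+1)) +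
    RingQuot.mkRingHom HeisRel (bF m) * RingQuot.mkRingHom HeisRel (aF n)
  rw [← map_mul, ← map_mul, ← map_mul, ← map_add, RingQuot.mkRingHom_rel (HeisRel.ab n m)]

lemma hb_prod_perm {l₁ l₂ : List ℕ} (h : l₁.Perm l₂) :
    (l₁.map hb).prod = (l₂.map hb).prod :=
  (h.map hb).prod_eq' (List.pairwise_of_forall_mem_list (by
    simp only [List.mem_map]
    rintro _ ⟨a, -, rfl⟩ _ ⟨b, -, rfl⟩
    exact hb_comm a b))

lemma ha_prod_perm {l₁ l₂ : List ℕ} (h : l₁.Perm l₂) :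
    (l₁.map ha).prod = (l₂.map ha).prod :=
  (h.map ha).prod_eq' (List.pairwise_of_forall_mem_list (by
    simp only [List.mem_map]
    rintro _ ⟨a, -, rfl⟩ _ ⟨b, -, rfl⟩
    exact ha_comm a b))

noncomputable def SpanNM : Submodule ℤ HeisZ :=
  Submodule.span ℤ (Set.range fun p : NP => normalMonomial p.1)

lemma nm_mem (p : List ℕ × List ℕ) (hp : NormalPair p) : normalMonomial p ∈ SpanNM :=
  Submodule.subset_span ⟨⟨p, hp⟩, rfl⟩

lemma one_mem_S : (1 : HeisZ) ∈ SpanNM := by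
  have := nm_mem ([], []) ⟨List.Pairwise.nil, List.Pairwise.nil, by simp, by simp⟩
  simpa [normalMonomial] using this

lemma normalPair_orderedInsert_left {m : ℕ} (hm : 1 ≤ m) {ms as : List ℕ}
    (h : NormalPair (ms, as)) : NormalPair (ms.orderedInsert (· ≤ ·) m, as) := by
  obtain ⟨h1, h2, h3, h4⟩ := h
  refine ⟨List.Pairwise.orderedInsert m ms h1, h2, ?_, h4⟩
  intro x hx
  rcases (List.mem_orderedInsert _).mp hx with rfl | hx
  · exact hm
  · exact h3 x hx

lemma normalPair_orderedInsert_right {n : ℕ} (hn : 1 ≤ n) {ms as : List ℕ}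
    (h : NormalPair (ms, as)) : NormalPair (ms, as.orderedInsert (· ≤ ·) n) := by
  obtain ⟨h1, h2, h3, h4⟩ := h
  refine ⟨h1, List.Pairwise.orderedInsert n as h2, h3, ?_⟩
  intro x hx
  rcases (List.mem_orderedInsert _).mp hx with rfl | hx
  · exact hn
  · exact h4 x hx

lemma hb_mul_nm (m : ℕ) {p : List ℕ × List ℕ} (hp : NormalPair p) :
    hb m * normalMonomial p ∈ SpanNM := by
  cases m with
  | zero => rw [hb_zero, one_mul]; exact nm_mem p hp
  | succ m =>
      obtain ⟨ms, as⟩ := p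
      have key : hb (m+1) * normalMonomial (ms, as) =
          normalMonomial (ms.orderedInsert (· ≤ ·) (m+1), as) := by
        rw [nm_def, nm_def, ← mul_assoc]
        congr 1
        rw [← List.prod_cons, ← List.map_cons]
        exact hb_prod_perm (List.perm_orderedInsert (· ≤ ·) (m+1) ms).symm
      rw [key]
      exact nm_mem _ (normalPair_orderedInsert_left (Nat.succ_le_succ (Nat.zero_le m)) hp)

lemma hb_mul_S (m : ℕ) {s : HeisZ} (hs : s ∈ SpanNM) : hb m * s ∈ SpanNM := by
  induction hs using Submodule.span_induction with
  | mem x hx => obtain ⟨p, rfl⟩ := hx; exact hb_mul_nm m p.2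
  | zero => rw [mul_zero]; exact Submodule.zero_mem _
  | add x y _ _ hx hy => rw [mul_add]; exact Submodule.add_mem _ hx hy
  | smul a x _ hx => rw [mul_smul_comm]; exact Submodule.smul_mem _ a hx

lemma ha_mul_nm (n : ℕ) {p : List ℕ × List ℕ} (hp : NormalPair p) :
    ha n * normalMonomial p ∈ SpanNM := by
  obtain ⟨ms, as⟩ := p
  induction ms generalizing n with
  | nil =>
      cases n with
      | zero => rw [ha_zero, one_mul]; exact nm_mem _ hp
      | succ n =>
          have key : ha (n+1) * normalMonomial ([], as) =
              normalMonomial ([], as.orderedInsert (· ≤ ·) (n+1)) := by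
            rw [nm_def, nm_def]
            simp only [List.map_nil, List.prod_nil, one_mul]
            rw [← List.prod_cons, ← List.map_cons]
            exact ha_prod_perm (List.perm_orderedInsert (· ≤ ·) (n+1) as).symm
          rw [key]
          exact nm_mem _ (normalPair_orderedInsert_right (Nat.succ_le_succ (Nat.zero_le n)) hp)
  | cons m ms ih =>
      have hp' : NormalPair (ms, as) := by
        obtain ⟨h1, h2, h3, h4⟩ := hp
        exact ⟨h1.of_cons, h2, fun x hx => h3 x (List.mem_cons_of_mem _ hx), h4⟩
      obtain ⟨k, rfl⟩ : ∃ k, m = k + 1 :=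
        ⟨m - 1, by have := hp.2.2.1 m List.mem_cons_self; omega⟩
      cases n with
      | zero => rw [ha_zero, one_mul]; exact nm_mem _ hp
      | succ n =>
          have split : normalMonomial ((k+1) :: ms, as) =
              hb (k+1) * normalMonomial (ms, as) := by
            rw [nm_def, nm_def, List.map_cons, List.prod_cons, mul_assoc]
          rw [split, ← mul_assoc, ha_hb_rel n k, add_mul, mul_assoc, mul_assoc]
          exact Submodule.add_mem _
            (hb_mul_S (k+1) (ih (n+1) hp'))
            (hb_mul_S k (ih n hp'))

lemma ha_mul_S (n : ℕ) {s : HeisZ} (hs : s ∈ SpanNM) : ha n * s ∈ SpanNM := by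
  induction hs using Submodule.span_induction with
  | mem x hx => obtain ⟨p, rfl⟩ := hx; exact ha_mul_nm n p.2
  | zero => rw [mul_zero]; exact Submodule.zero_mem _
  | add x y _ _ hx hy => rw [mul_add]; exact Submodule.add_mem _ hx hy
  | smul a x _ hx => rw [mul_smul_comm]; exact Submodule.smul_mem _ a hx

lemma hb_list_mul_S (l : List ℕ) {s : HeisZ} (hs : s ∈ SpanNM) :
    (l.map hb).prod * s ∈ SpanNM := by
  induction l generalizing s with
  | nil => simpa using hs
  | cons m l ih =>
      rw [List.map_cons, List.prod_cons, mul_assoc]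
      exact hb_mul_S m (ih hs)

lemma ha_list_mul_S (l : List ℕ) {s : HeisZ} (hs : s ∈ SpanNM) :
    (l.map ha).prod * s ∈ SpanNM := by
  induction l generalizing s with
  | nil => simpa using hs
  | cons m l ih =>
      rw [List.map_cons, List.prod_cons, mul_assoc]
      exact ha_mul_S m (ih hs)

lemma mul_S {x y : HeisZ} (hx : x ∈ SpanNM) (hy : y ∈ SpanNM) : x * y ∈ SpanNM := by
  induction hx using Submodule.span_induction with
  | mem x hx =>
      obtain ⟨⟨⟨ms, as⟩, hp⟩, rfl⟩ := hx
      show normalMonomial (ms, as) * y ∈ SpanNM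
      rw [nm_def, mul_assoc]
      exact hb_list_mul_S ms (ha_list_mul_S as hy)
  | zero => rw [zero_mul]; exact Submodule.zero_mem _
  | add a b _ _ hxa hxb => rw [add_mul]; exact Submodule.add_mem _ hxa hxb
  | smul a z _ hz => rw [smul_mul_assoc]; exact Submodule.smul_mem _ a hz

lemma all_mem_S (z : HeisZ) : z ∈ SpanNM := by
  obtain ⟨w, rfl⟩ := RingQuot.mkRingHom_surjective HeisRel z
  induction w using FreeAlgebra.induction with
  | grade0 r =>
      rw [show (algebraMap ℤ (FreeAlgebra ℤ HeisGen)) r = ((r : ℤ) : FreeAlgebra ℤ HeisGen) by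
        exact eq_intCast _ r]
      rw [map_intCast]
      rw [show ((r : ℤ) : HeisZ) = r • (1 : HeisZ) from (zsmul_one r).symm]
      exact Submodule.smul_mem _ r one_mem_S
  | grade1 x =>
      cases x with
      | A n =>
          rw [show RingQuot.mkRingHom HeisRel (FreeAlgebra.ι ℤ (HeisGen.A n)) = ha (n+1) from rfl,
            ← mul_one (ha (n+1))]
          exact ha_mul_S (n+1) one_mem_S
      | B n =>
          rw [show RingQuot.mkRingHom HeisRel (FreeAlgebra.ι ℤ (HeisGen.B n)) = hb (n+1) from rfl,
            ← mul_one (hb (n+1))]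
          exact hb_mul_S (n+1) one_mem_S
  | add a b ha hb => rw [map_add]; exact Submodule.add_mem _ ha hb
  | mul a b ha hb => rw [map_mul]; exact mul_S ha hb

/-- `H_ℤ` is free as an abelian group with basis the normal-form
monomials `b_{m₁}⋯b_{m_k} a_{n₁}⋯a_{n_r}` with `1 ≤ m₁ ≤ ⋯ ≤ m_k`,
`1 ≤ n₁ ≤ ⋯ ≤ n_r`. -/
theorem heisZ_free_with_monomial_basis :
    ∃ Bas : Module.Basis {p : List ℕ × List ℕ // NormalPair p} ℤ HeisZ,
      ∀ p : {p : List ℕ × List ℕ // NormalPair p}, Bas p = normalMonomial p.1 := by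
  refine ⟨Module.Basis.mk nm_linearIndependent ?_, fun p => Module.Basis.mk_apply _ _ _⟩
  intro x _
  exact all_mem_S x
end

section
/- Let H ≤ G be finite groups with left coset representatives g_1, …, g_m, and let p_H : kG → kH be the projection killing G∖H. Then for every g ∈ G, Σ_{i=1}^m p_H(g g_i^{-1}) g_i = g and Σ_{i=1}^m g_i^{-1} p_H(g_i g) = g in kG. (These are the zig-zag/snake identities for the second adjunction between induction and restriction.) -/
open MonoidAlgebra Classical

variable {k : Type} [CommRing k] {G : Type} [Group G] [Fintype G]

/-- The projection `p_H : kG → kG` (with image `kH ⊆ kG`) sending `g ↦ g` for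
`g ∈ H` and `g ↦ 0` otherwise, extended `k`-linearly. -/
noncomputable def pHG (k : Type) [CommRing k] {G : Type} [Group G] (H : Subgroup G) :
    MonoidAlgebra k G →ₗ[k] MonoidAlgebra k G where
  toFun f := MonoidAlgebra.ofCoeff (f.coeff.filter (· ∈ H))
  map_add' f g := by
    simp only [MonoidAlgebra.coeff_add, Finsupp.filter_add]; rfl
  map_smul' c f := by
    simp only [MonoidAlgebra.coeff_smul, Finsupp.filter_smul]; rfl

lemma pHG_of (H : Subgroup G) (x : G) :
    pHG k H (MonoidAlgebra.of k G x) = if x ∈ H then MonoidAlgebra.of k G x else 0 := by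
  by_cases h : x ∈ H <;>
    simp [pHG, MonoidAlgebra.of_apply, h]

/-- For coset representatives `G = ⨆ᵢ H gᵢ` and any `g ∈ G`,
`∑ᵢ p_H(g gᵢ⁻¹) gᵢ = g` and `∑ᵢ gᵢ⁻¹ p_H(gᵢ g) = g` in `kG`
(the zig-zag identities for the second adjunction). -/
theorem pH_zigzag (H : Subgroup G) (m : ℕ) (r : Fin m → G)
    (hr : ∀ g : G, ∃! i : Fin m, g * (r i)⁻¹ ∈ H) (g : G) :
    (∑ i : Fin m,
        pHG k H (MonoidAlgebra.of k G (g * (r i)⁻¹)) * MonoidAlgebra.of k G (r i)) =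
        MonoidAlgebra.of k G g ∧
      (∑ i : Fin m,
        MonoidAlgebra.of k G ((r i)⁻¹) * pHG k H (MonoidAlgebra.of k G (r i * g))) =
        MonoidAlgebra.of k G g := by
  constructor
  · obtain ⟨i₀, hi₀, hu⟩ := hr g
    rw [Finset.sum_eq_single i₀]
    · rw [pHG_of, if_pos hi₀, ← map_mul, inv_mul_cancel_right]
    · intro j _ hj
      rw [pHG_of, if_neg, zero_mul]
      exact fun h => hj (hu j h)
    · simp
  · obtain ⟨i₀, hi₀, hu⟩ := hr g⁻¹
    rw [Finset.sum_eq_single i₀]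
    · have : r i₀ * g ∈ H := by
        have := H.inv_mem hi₀
        simpa [mul_inv_rev] using this
      rw [pHG_of, if_pos this, ← map_mul, inv_mul_cancel_left]
    · intro j _ hj
      rw [pHG_of, if_neg, mul_zero]
      intro h
      exact hj (hu j (by simpa [mul_inv_rev] using H.inv_mem h))
    · simp
end

section
/- (Mackey decomposition for S_n ⊂ S_{n+1}) For the standard inclusion of symmetric group algebras k[S_n] ⊂ k[S_{n+1}] (S_n the stabilizer of n+1), there is an isomorphism of (k[S_n], k[S_n])-bimodules: k[S_{n+1}] ≅ (k[S_n] ⊗_{k[S_{n-1}]} k[S_n]) ⊕ k[S_n], given explicitly by: g ↦ g for g ∈ S_n (second summand) and g s_n h ↦ g ⊗ h for g, h ∈ S_n, where s_n = (n, n+1). -/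
open TensorProduct MonoidAlgebra Equiv

/-- The equivalence between `Fin N` and the subtype of `Fin (N+1)` of elements
less than `N` (the complement of the last point). -/
def finSubEquiv (N : ℕ) : Fin N ≃ {i : Fin (N + 1) // (i : ℕ) < N} where
  toFun i := ⟨i.castSucc, by simpa using i.isLt⟩
  invFun j := ⟨(j : Fin (N + 1)), j.2⟩
  left_inv i := rfl
  right_inv j := by
    ext
    simp [Fin.castSucc]

/-- The standard inclusion `S_N ⊆ S_{N+1}` as the stabilizer of the last point,
as a monoid homomorphism. -/
def permIncl (N : ℕ) : Perm (Fin N) →* Perm (Fin (N + 1)) :=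
  Perm.extendDomainHom (finSubEquiv N)

variable {k : Type} [CommRing k]

/-- The submodule of `k[S_{N+1}] ⊗[k] k[S_{N+1}]` spanned by the tensor
relations over `k[S_N]`, so that quotienting yields
`k[S_{N+1}] ⊗_{k[S_N]} k[S_{N+1}]`. -/
noncomputable def symBalancedRel (k : Type) [CommRing k] (N : ℕ) :
    Submodule k
      (MonoidAlgebra k (Perm (Fin (N + 1))) ⊗[k] MonoidAlgebra k (Perm (Fin (N + 1)))) :=
  Submodule.span k
    {z | ∃ (x y : MonoidAlgebra k (Perm (Fin (N + 1)))) (σ : Perm (Fin N)),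
      z = (x * MonoidAlgebra.of k _ (permIncl N σ)) ⊗ₜ[k] y -
            x ⊗ₜ[k] (MonoidAlgebra.of k _ (permIncl N σ) * y)}

section Aux
variable {M : ℕ}

lemma permIncl_apply_lt (σ : Perm (Fin M)) (b : Fin (M + 1)) (h : (b : ℕ) < M) :
    permIncl M σ b = (σ ⟨b, h⟩).castSucc := by
  have := Equiv.Perm.extendDomain_apply_subtype σ (finSubEquiv M) (b := b) h
  rw [permIncl, Perm.extendDomainHom]
  simp only [MonoidHom.coe_mk, OneHom.coe_mk] at this ⊢
  rw [this]
  congr 1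

lemma permIncl_apply_last (σ : Perm (Fin M)) :
    permIncl M σ (Fin.last M) = Fin.last M := by
  have := Equiv.Perm.extendDomain_apply_not_subtype σ (finSubEquiv M)
    (b := Fin.last M) (by simp)
  rw [permIncl, Perm.extendDomainHom]
  simpa using this

lemma val_lt_of_ne_last {b : Fin (M + 1)} (h : b ≠ Fin.last M) : (b : ℕ) < M := by
  rcases lt_or_eq_of_le (Nat.lt_succ_iff.mp b.isLt) with h' | h'
  · exact h'
  · exact absurd (Fin.ext h') h

lemma eq_last_of_not_lt {b : Fin (M + 1)} (h : ¬ (b : ℕ) < M) : b = Fin.last M := by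
  by_contra hb
  exact h (val_lt_of_ne_last hb)

/-- Retraction: a permutation fixing the last point comes from `Perm (Fin M)`. -/
def pRetract (π : Perm (Fin (M + 1))) (hπ : π (Fin.last M) = Fin.last M) :
    Perm (Fin M) :=
  ((finSubEquiv M).symm.permCongr
    (π.subtypePerm (fun x => by
      constructor
      · intro hx
        by_contra hc
        have hx' : x = Fin.last M := eq_last_of_not_lt hc
        rw [hx', hπ] at hx
        simp at hx
      · intro hx
        by_contra hc
        have : π x = Fin.last M := eq_last_of_not_lt hc
        have : x = Fin.last M := π.injective (by rw [this, hπ])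
        simp [this] at hx)))

lemma permIncl_pRetract (π : Perm (Fin (M + 1))) (hπ : π (Fin.last M) = Fin.last M) :
    permIncl M (pRetract π hπ) = π := by
  ext b
  by_cases h : (b : ℕ) < M
  · rw [permIncl_apply_lt _ _ h]
    simp only [pRetract, permCongr_apply, symm_symm, finSubEquiv, coe_fn_mk,
      coe_fn_symm_mk, Perm.subtypePerm_apply, Fin.coe_castSucc]
    have hb : ((⟨(b : ℕ), h⟩ : Fin M).castSucc) = b := by ext; simp
    rw [hb]
  · rw [eq_last_of_not_lt h, permIncl_apply_last, hπ]

lemma pRetract_permIncl (σ : Perm (Fin M)) (h : permIncl M σ (Fin.last M) = Fin.last M) :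
    pRetract (permIncl M σ) h = σ :=
  Equiv.Perm.extendDomainHom_injective (finSubEquiv M) (permIncl_pRetract _ _)

end Aux

section Main
variable (k) (N : ℕ)

local notation "A" => MonoidAlgebra k (Perm (Fin (N + 1)))
local notation "B" => MonoidAlgebra k (Perm (Fin (N + 2)))

/-- The transposition of the two last points of `Fin (N+2)`. -/
def swN : Perm (Fin (N + 2)) :=
  Equiv.swap (⟨N, Nat.lt_succ_of_lt (Nat.lt_succ_self N)⟩ : Fin (N + 2)) ⟨N + 1, Nat.lt_succ_self (N + 1)⟩

lemma lastN_eq : (⟨N + 1, Nat.lt_succ_self (N + 1)⟩ : Fin (N + 2)) = Fin.last (N + 1) := rfl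

lemma castSucc_lastN : ((Fin.last N).castSucc : Fin (N + 2)) = ⟨N, Nat.lt_succ_of_lt (Nat.lt_succ_self N)⟩ := rfl

/-- The algebra inclusion `k[S_{N+1}] → k[S_{N+2}]`. -/
noncomputable def incB : MonoidAlgebra k (Perm (Fin (N + 1))) →ₐ[k]
    MonoidAlgebra k (Perm (Fin (N + 2))) :=
  MonoidAlgebra.mapDomainAlgHom k k (permIncl (N + 1))

lemma incB_of (g : Perm (Fin (N + 1))) :
    incB k N (MonoidAlgebra.of k _ g) = MonoidAlgebra.of k _ (permIncl (N + 1) g) := by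
  simp [incB, MonoidAlgebra.of_apply, MonoidAlgebra.mapDomain_single]

/-- `x ⊗ y ↦ ι(x) * s * ι(y)` as a bilinear map. -/
noncomputable def bilT : MonoidAlgebra k (Perm (Fin (N + 1))) →ₗ[k]
    MonoidAlgebra k (Perm (Fin (N + 1))) →ₗ[k] MonoidAlgebra k (Perm (Fin (N + 2))) :=
  LinearMap.mk₂ k
    (fun x y => incB k N x * MonoidAlgebra.of k _ (swN N) * incB k N y)
    (by intro x x' y; simp [map_add, add_mul])
    (by intro c x y; simp [map_smul, smul_mul_assoc])
    (by intro x y y'; simp [map_add, mul_add])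
    (by intro c x y; simp [map_smul, mul_smul_comm])

noncomputable def Tmap : (MonoidAlgebra k (Perm (Fin (N + 1))) ⊗[k]
    MonoidAlgebra k (Perm (Fin (N + 1)))) →ₗ[k] MonoidAlgebra k (Perm (Fin (N + 2))) :=
  TensorProduct.lift (bilT k N)

lemma commute_swN (c : Perm (Fin N)) :
    permIncl (N + 1) (permIncl N c) * swN N = swN N * permIncl (N + 1) (permIncl N c) := by
  set π := permIncl (N + 1) (permIncl N c) with hπ
  have h2 : π (⟨N, Nat.lt_succ_of_lt (Nat.lt_succ_self N)⟩ : Fin (N + 2)) = ⟨N, Nat.lt_succ_of_lt (Nat.lt_succ_self N)⟩ := by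
    have hlt : ((⟨N, Nat.lt_succ_of_lt (Nat.lt_succ_self N)⟩ : Fin (N + 2)) : ℕ) < N + 1 := by simp
    rw [hπ, permIncl_apply_lt _ _ hlt]
    have he : (⟨((⟨N, Nat.lt_succ_of_lt (Nat.lt_succ_self N)⟩ : Fin (N + 2)) : ℕ), hlt⟩ : Fin (N + 1)) = Fin.last N := rfl
    rw [he, permIncl_apply_last]
    rfl
  have h1 : π (⟨N + 1, Nat.lt_succ_self (N + 1)⟩ : Fin (N + 2)) = ⟨N + 1, Nat.lt_succ_self (N + 1)⟩ := by
    rw [hπ]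
    exact permIncl_apply_last _
  rw [swN, Equiv.mul_swap_eq_swap_mul, h1, h2]

lemma rel_le_ker : symBalancedRel k N ≤ LinearMap.ker (Tmap k N) := by
  rw [symBalancedRel, Submodule.span_le]
  rintro z ⟨x, y, c, rfl⟩
  have hcomm : MonoidAlgebra.of k (Perm (Fin (N + 2))) (permIncl (N + 1) (permIncl N c)) *
      MonoidAlgebra.of k _ (swN N) =
      MonoidAlgebra.of k _ (swN N) *
        MonoidAlgebra.of k (Perm (Fin (N + 2))) (permIncl (N + 1) (permIncl N c)) := by
    rw [← map_mul, ← map_mul, commute_swN]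
  simp only [SetLike.mem_coe, LinearMap.mem_ker, map_sub, Tmap, TensorProduct.lift.tmul,
    bilT, LinearMap.mk₂_apply, map_mul, incB_of]
  rw [sub_eq_zero]
  rw [show ∀ a b c d : MonoidAlgebra k (Perm (Fin (N + 2))),
      a * b * c * d = a * ((b * c) * d) from by intros; simp [mul_assoc],
    show ∀ a b c d : MonoidAlgebra k (Perm (Fin (N + 2))),
      a * c * (b * d) = a * ((c * b) * d) from by intros; simp [mul_assoc], hcomm]

noncomputable def ψmap :
    (((MonoidAlgebra k (Perm (Fin (N + 1))) ⊗[k] MonoidAlgebra k (Perm (Fin (N + 1)))) ⧸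
        symBalancedRel k N) × MonoidAlgebra k (Perm (Fin (N + 1)))) →ₗ[k]
      MonoidAlgebra k (Perm (Fin (N + 2))) :=
  LinearMap.coprod (Submodule.liftQ _ (Tmap k N) (rel_le_ker k N)) (incB k N).toLinearMap

/-- first factor of the canonical decomposition of a permutation not fixing the top. -/
def gpart (σ : Perm (Fin (N + 2)))
    (h : ((σ (Fin.last (N + 1)) : Fin (N + 2)) : ℕ) < N + 1) : Perm (Fin (N + 1)) :=
  Equiv.swap ⟨(σ (Fin.last (N + 1)) : Fin (N + 2)), h⟩ (Fin.last N)

lemma gpart_fix (σ : Perm (Fin (N + 2)))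
    (h : ((σ (Fin.last (N + 1)) : Fin (N + 2)) : ℕ) < N + 1) :
    (swN N * (permIncl (N + 1) (gpart N σ h))⁻¹ * σ) (Fin.last (N + 1)) =
      Fin.last (N + 1) := by
  simp only [Perm.mul_apply]
  rw [← map_inv, gpart, Equiv.swap_inv, permIncl_apply_lt _ _ h, Equiv.swap_apply_left,
    castSucc_lastN, swN, Equiv.swap_apply_left]
  rfl

def hpart (σ : Perm (Fin (N + 2)))
    (h : ((σ (Fin.last (N + 1)) : Fin (N + 2)) : ℕ) < N + 1) : Perm (Fin (N + 1)) :=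
  pRetract _ (gpart_fix N σ h)

lemma decomp_eq (σ : Perm (Fin (N + 2)))
    (h : ((σ (Fin.last (N + 1)) : Fin (N + 2)) : ℕ) < N + 1) :
    permIncl (N + 1) (gpart N σ h) * swN N * permIncl (N + 1) (hpart N σ h) = σ := by
  rw [hpart, permIncl_pRetract]
  rw [show ∀ a b : Perm (Fin (N + 2)), a * b * (b * a⁻¹ * σ) = a * (b * b) * (a⁻¹ * σ)
    from by intros; simp [mul_assoc]]
  rw [show swN N * swN N = 1 from swap_mul_self _ _]
  simp [mul_assoc]

noncomputable def Φfun (σ : Perm (Fin (N + 2))) :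
    (((MonoidAlgebra k (Perm (Fin (N + 1))) ⊗[k] MonoidAlgebra k (Perm (Fin (N + 1)))) ⧸
        symBalancedRel k N) × MonoidAlgebra k (Perm (Fin (N + 1)))) :=
  if h : ((σ (Fin.last (N + 1)) : Fin (N + 2)) : ℕ) < N + 1 then
    ((symBalancedRel k N).mkQ
        (MonoidAlgebra.of k _ (gpart N σ h) ⊗ₜ[k] MonoidAlgebra.of k _ (hpart N σ h)), 0)
  else (0, MonoidAlgebra.of k _ (pRetract σ (eq_last_of_not_lt h)))

noncomputable def Φmap :
    MonoidAlgebra k (Perm (Fin (N + 2))) →ₗ[k]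
      (((MonoidAlgebra k (Perm (Fin (N + 1))) ⊗[k] MonoidAlgebra k (Perm (Fin (N + 1)))) ⧸
          symBalancedRel k N) × MonoidAlgebra k (Perm (Fin (N + 1)))) :=
  Finsupp.linearCombination k (Φfun k N) ∘ₗ (MonoidAlgebra.coeffLinearEquiv k).toLinearMap

lemma Φmap_of (σ : Perm (Fin (N + 2))) :
    Φmap k N (MonoidAlgebra.of k _ σ) = Φfun k N σ := by
  simp only [Φmap, MonoidAlgebra.of_apply, LinearMap.comp_apply, LinearEquiv.coe_coe,
    MonoidAlgebra.coeffLinearEquiv_apply, MonoidAlgebra.coeff_single]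
  erw [Finsupp.linearCombination_single, one_smul]

lemma Φfun_incl (g : Perm (Fin (N + 1))) :
    Φfun k N (permIncl (N + 1) g) = (0, MonoidAlgebra.of k _ g) := by
  have hfix := permIncl_apply_last (M := N + 1) g
  rw [Φfun, dif_neg (by rw [hfix]; simp), pRetract_permIncl]

lemma Φfun_swap (g h : Perm (Fin (N + 1))) :
    Φfun k N (permIncl (N + 1) g * swN N * permIncl (N + 1) h) =
      ((symBalancedRel k N).mkQ
        (MonoidAlgebra.of k _ g ⊗ₜ[k] MonoidAlgebra.of k _ h), 0) := by
  set σ := permIncl (N + 1) g * swN N * permIncl (N + 1) h with hσ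
  have hσlast : σ (Fin.last (N + 1)) = (g (Fin.last N)).castSucc := by
    rw [hσ]
    simp only [Perm.mul_apply]
    rw [permIncl_apply_last, show (Fin.last (N + 1)) = (⟨N + 1, Nat.lt_succ_self (N + 1)⟩ : Fin (N + 2))
        from rfl, swN, Equiv.swap_apply_right,
      permIncl_apply_lt _ _ (show ((⟨N, Nat.lt_succ_of_lt (Nat.lt_succ_self N)⟩ : Fin (N + 2)) : ℕ) < N + 1 by simp)]
    rfl
  have hlt : ((σ (Fin.last (N + 1)) : Fin (N + 2)) : ℕ) < N + 1 := by
    rw [hσlast]; simp; omega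
  rw [Φfun, dif_pos hlt]
  set g₀ := Equiv.swap (g (Fin.last N)) (Fin.last N) with hg₀def
  have hg₀ : gpart N σ hlt = g₀ := by
    rw [gpart, hg₀def]
    congr 1
    apply Fin.ext
    show ((σ (Fin.last (N + 1)) : Fin (N + 2)) : ℕ) = _
    rw [hσlast]
    simp
  set c := g₀⁻¹ * g with hcdef
  have hc_fix : c (Fin.last N) = Fin.last N := by
    rw [hcdef, hg₀def]
    simp [Perm.mul_apply]
  set c' := pRetract c hc_fix with hc'def
  have hc' : permIncl N c' = c := permIncl_pRetract _ _
  have key : swN N * (permIncl (N + 1) (gpart N σ hlt))⁻¹ * σ =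
      permIncl (N + 1) (c * h) := by
    rw [hg₀, hσ, map_mul]
    rw [show ∀ a b e : Perm (Fin (N + 2)),
        a * b⁻¹ * (permIncl (N + 1) g * a * e) = a * (b⁻¹ * permIncl (N + 1) g) * a * e
        from by intros; simp [mul_assoc]]
    rw [← map_inv, ← map_mul, ← hcdef, ← hc']
    rw [show ∀ b e : Perm (Fin (N + 2)), swN N * b * swN N * e = swN N * (b * swN N) * e
      from by intros; simp [mul_assoc], commute_swN]
    rw [show ∀ b e : Perm (Fin (N + 2)), swN N * (swN N * b) * e = (swN N * swN N) * (b * e)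
      from by intros; simp [mul_assoc]]
    rw [show swN N * swN N = 1 from swap_mul_self _ _]
    simp [map_mul, hc']
  have hhp : hpart N σ hlt = c * h := by
    apply Equiv.Perm.extendDomainHom_injective (finSubEquiv (N + 1))
    have : permIncl (N + 1) (hpart N σ hlt) =
        swN N * (permIncl (N + 1) (gpart N σ hlt))⁻¹ * σ := by
      rw [hpart, permIncl_pRetract]
    rw [show Equiv.Perm.extendDomainHom (finSubEquiv (N + 1)) = permIncl (N + 1) from rfl,
      this, key]
  rw [hg₀, hhp]
  refine Prod.ext ?_ rfl
  simp only [Submodule.mkQ_apply]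
  rw [Submodule.Quotient.eq]
  have hgen : (MonoidAlgebra.of k _ g ⊗ₜ[k] MonoidAlgebra.of k _ h -
      MonoidAlgebra.of k _ g₀ ⊗ₜ[k] MonoidAlgebra.of k _ (c * h)) ∈ symBalancedRel k N := by
    apply Submodule.subset_span
    refine ⟨MonoidAlgebra.of k _ g₀, MonoidAlgebra.of k _ h, c', ?_⟩
    rw [← map_mul, ← map_mul, hc', show g₀ * c = g from by rw [hcdef]; group]
  rw [show MonoidAlgebra.of k (Perm (Fin (N+1))) g₀ ⊗ₜ[k] MonoidAlgebra.of k _ (c * h) -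
      MonoidAlgebra.of k _ g ⊗ₜ[k] MonoidAlgebra.of k _ h =
      -(MonoidAlgebra.of k _ g ⊗ₜ[k] MonoidAlgebra.of k _ h -
        MonoidAlgebra.of k _ g₀ ⊗ₜ[k] MonoidAlgebra.of k _ (c * h)) from (neg_sub _ _).symm]
  exact neg_mem hgen

lemma psi_phi : (ψmap k N).comp (Φmap k N) = LinearMap.id := by
  apply MonoidAlgebra.lhom_ext'
  intro σ
  apply LinearMap.ext
  intro b
  have h1 : Φmap k N (MonoidAlgebra.single σ b) = b • Φfun k N σ := by
    rw [Φmap]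
    simp only [LinearMap.comp_apply, LinearEquiv.coe_coe,
      MonoidAlgebra.coeffLinearEquiv_apply, MonoidAlgebra.coeff_single]
    erw [Finsupp.linearCombination_single]
  simp only [LinearMap.comp_apply, LinearMap.id_apply, MonoidAlgebra.lsingle_apply]
  erw [h1]
  rw [map_smul]
  by_cases h : ((σ (Fin.last (N + 1)) : Fin (N + 2)) : ℕ) < N + 1
  · rw [Φfun, dif_pos h]
    have : ψmap k N
        ((symBalancedRel k N).mkQ
          (MonoidAlgebra.of k _ (gpart N σ h) ⊗ₜ[k] MonoidAlgebra.of k _ (hpart N σ h)), 0) =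
        MonoidAlgebra.of k _ σ := by
      rw [ψmap]
      simp only [LinearMap.coprod_apply, map_zero, add_zero, Submodule.mkQ_apply,
        Submodule.liftQ_apply, Tmap, TensorProduct.lift.tmul, bilT, LinearMap.mk₂_apply,
        incB_of]
      rw [← map_mul, ← map_mul, decomp_eq]
    rw [this, MonoidAlgebra.of_apply]
    erw [MonoidAlgebra.smul_single']
    rw [mul_one]
  · rw [Φfun, dif_neg h]
    have : ψmap k N (0, MonoidAlgebra.of k _ (pRetract σ (eq_last_of_not_lt h))) =
        MonoidAlgebra.of k _ σ := by
      rw [ψmap]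
      simp only [LinearMap.coprod_apply, map_zero, zero_add, AlgHom.toLinearMap_apply,
        incB_of, permIncl_pRetract]
    rw [this, MonoidAlgebra.of_apply]
    erw [MonoidAlgebra.smul_single']
    rw [mul_one]

lemma Φmap_single (σ : Perm (Fin (N + 2))) (b : k) :
    Φmap k N (MonoidAlgebra.single σ b) = b • Φfun k N σ := by
  rw [Φmap]
  simp only [LinearMap.comp_apply, LinearEquiv.coe_coe,
    MonoidAlgebra.coeffLinearEquiv_apply, MonoidAlgebra.coeff_single]
  erw [Finsupp.linearCombination_single]

lemma phi_psi : (Φmap k N).comp (ψmap k N) = LinearMap.id := by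
  apply LinearMap.prod_ext
  · -- on the quotient factor
    apply Submodule.linearMap_qext
    apply TensorProduct.ext
    apply MonoidAlgebra.lhom_ext'
    intro g
    apply LinearMap.ext
    intro b
    apply MonoidAlgebra.lhom_ext'
    intro h
    apply LinearMap.ext
    intro c
    have hT : ψmap k N ((symBalancedRel k N).mkQ
        ((MonoidAlgebra.single g b : MonoidAlgebra k (Perm (Fin (N + 1)))) ⊗ₜ[k]
          (MonoidAlgebra.single h c : MonoidAlgebra k (Perm (Fin (N + 1))))), 0) =
        MonoidAlgebra.single (permIncl (N + 1) g * swN N * permIncl (N + 1) h) (b * c) := by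
      simp only [ψmap, LinearMap.coprod_apply, map_zero, add_zero,
        Submodule.mkQ_apply, Submodule.liftQ_apply, Tmap, TensorProduct.lift.tmul, bilT,
        LinearMap.mk₂_apply, incB, MonoidAlgebra.mapDomainAlgHom_apply]
      erw [MonoidAlgebra.mapDomain_single, MonoidAlgebra.mapDomain_single]
      rw [MonoidAlgebra.of_apply]
      rw [MonoidAlgebra.single_mul_single, MonoidAlgebra.single_mul_single]
      rw [mul_one]
    have hΦ : Φmap k N
        (MonoidAlgebra.single (permIncl (N + 1) g * swN N * permIncl (N + 1) h) (b * c)) =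
        (b * c) • ((symBalancedRel k N).mkQ
          (MonoidAlgebra.of k _ g ⊗ₜ[k] MonoidAlgebra.of k _ h), 0) := by
      rw [Φmap_single, Φfun_swap]
    have hsingle : (MonoidAlgebra.single g b : MonoidAlgebra k (Perm (Fin (N + 1)))) ⊗ₜ[k]
        (MonoidAlgebra.single h c : MonoidAlgebra k (Perm (Fin (N + 1)))) =
        (b * c) • (MonoidAlgebra.of k _ g ⊗ₜ[k] MonoidAlgebra.of k _ h) := by
      rw [MonoidAlgebra.of_apply, MonoidAlgebra.of_apply]
      rw [show (MonoidAlgebra.single g b : MonoidAlgebra k (Perm (Fin (N + 1)))) =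
          b • (MonoidAlgebra.single g 1 : MonoidAlgebra k (Perm (Fin (N + 1)))) from by
            erw [MonoidAlgebra.smul_single']; rw [mul_one]]
      rw [show (MonoidAlgebra.single h c : MonoidAlgebra k (Perm (Fin (N + 1)))) =
          c • (MonoidAlgebra.single h 1 : MonoidAlgebra k (Perm (Fin (N + 1)))) from by
            erw [MonoidAlgebra.smul_single']; rw [mul_one]]
      simp only [TensorProduct.smul_tmul', TensorProduct.tmul_smul, smul_smul]
      rw [mul_comm c b]
    show Φmap k N (ψmap k N _) = _
    simp only [LinearMap.inl_apply, TensorProduct.mk_apply, LinearMap.compr₂_apply,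
      LinearMap.comp_apply, LinearMap.id_apply, MonoidAlgebra.lsingle_apply]
    erw [hT, hΦ]
    show _ = ((symBalancedRel k N).mkQ
        ((MonoidAlgebra.single g b : MonoidAlgebra k (Perm (Fin (N + 1)))) ⊗ₜ[k]
          (MonoidAlgebra.single h c : MonoidAlgebra k (Perm (Fin (N + 1))))), 0)
    rw [hsingle, map_smul]
    simp only [Prod.smul_mk, smul_zero]
  · apply MonoidAlgebra.lhom_ext'
    intro g
    apply LinearMap.ext
    intro b
    have hψ : ψmap k N (0, (MonoidAlgebra.single g b : MonoidAlgebra k (Perm (Fin (N + 1))))) =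
        MonoidAlgebra.single (permIncl (N + 1) g) b := by
      simp only [ψmap, LinearMap.coprod_apply, map_zero, zero_add,
        AlgHom.toLinearMap_apply, incB, MonoidAlgebra.mapDomainAlgHom_apply]
      erw [MonoidAlgebra.mapDomain_single]
    simp only [LinearMap.comp_apply, LinearMap.inr_apply, LinearMap.id_apply,
      MonoidAlgebra.lsingle_apply]
    erw [hψ]
    rw [Φmap_single, Φfun_incl, Prod.smul_mk, smul_zero, MonoidAlgebra.of_apply]
    erw [MonoidAlgebra.smul_single']
    rw [mul_one]

end Main

/-- **Mackey decomposition for `S_n ⊂ S_{n+1}`.**  For the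
standard inclusion `k[S_{n+1}] ⊃ k[S_n]` (with `n = N+1`, `S_n` the stabilizer
of the last point `n+1`), there is an isomorphism of `(k[S_n], k[S_n])`-bimodules
`k[S_{n+1}] ≅ (k[S_n] ⊗_{k[S_{n-1}]} k[S_n]) ⊕ k[S_n]`, given by `g ↦ g` for
`g ∈ S_n` (second summand) and `g sₙ h ↦ g ⊗ h` for `g, h ∈ S_n`, where
`sₙ = (n, n+1)` is the transposition of the last two points. -/
theorem mackey_symmetric_group (N : ℕ) :
    ∃ φ : MonoidAlgebra k (Perm (Fin (N + 2))) ≃ₗ[k]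
        ((MonoidAlgebra k (Perm (Fin (N + 1))) ⊗[k]
            MonoidAlgebra k (Perm (Fin (N + 1)))) ⧸ symBalancedRel k N) ×
          MonoidAlgebra k (Perm (Fin (N + 1))),
      (∀ g : Perm (Fin (N + 1)),
          φ (MonoidAlgebra.of k _ (permIncl (N + 1) g)) =
            (0, MonoidAlgebra.of k _ g)) ∧
        ∀ g h : Perm (Fin (N + 1)),
          φ (MonoidAlgebra.of k _
              (permIncl (N + 1) g *
                Equiv.swap (⟨N, by omega⟩ : Fin (N + 2)) ⟨N + 1, by omega⟩ *
                permIncl (N + 1) h)) =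
            ((symBalancedRel k N).mkQ
                (MonoidAlgebra.of k _ g ⊗ₜ[k] MonoidAlgebra.of k _ h), 0) := by
  refine ⟨LinearEquiv.ofLinear (Φmap k N) (ψmap k N) (phi_psi k N) (psi_phi k N), ?_, ?_⟩
  · intro g
    rw [LinearEquiv.ofLinear_apply, Φmap_of, Φfun_incl]
  · intro g h
    rw [LinearEquiv.ofLinear_apply, Φmap_of]
    exact Φfun_swap k N g h
end

section
/- For n ≥ 1, the element c_{1,n} := Σ_{i=1}^n (i, i+1, …, n)·J_{n-1}·(n, n-1, …, i), where J_{n-1} = Σ_{j=1}^{n-1} (j, n), equals twice the sum of all transpositions in S_n: c_{1,n} = 2 Σ_{1 ≤ i < j ≤ n} (i, j). In particular, c_{1,n} lies in the center of k[S_n]. Also c_{0,n} := Σ_{i=1}^n (i,…,n)(n,…,i) = n·1. -/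
open Equiv MonoidAlgebra

/-- The adjacent transposition swapping the 0-indexed points `j` and `j+1` of
`Fin (N+1)` (and `1` if out of range). -/
noncomputable def adjT (N j : ℕ) : Perm (Fin (N + 1)) :=
  if h : j + 1 < N + 1 then Equiv.swap ⟨j, by omega⟩ ⟨j + 1, h⟩ else 1

/-- The cycle `(i, i+1, …, n)` of `S_n` in 1-indexed notation (`n = N+1`,
`i = j+1`): the product `t_j t_{j+1} ⋯ t_{N-1}` of adjacent transpositions,
which sends `j ↦ j+1 ↦ ⋯ ↦ N ↦ j` (0-indexed). -/
noncomputable def cyc (N j : ℕ) : Perm (Fin (N + 1)) :=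
  ((List.range (N - j)).map fun m => adjT N (j + m)).prod

/-- The Jucys–Murphy element `J_{n-1} = ∑_{j=1}^{n-1} (j, n)` of `k[S_n]`
(`n = N+1`). -/
noncomputable def jmLast (k : Type) [CommRing k] (N : ℕ) :
    MonoidAlgebra k (Perm (Fin (N + 1))) :=
  ∑ j : Fin N, MonoidAlgebra.of k (Perm (Fin (N + 1)))
    (Equiv.swap j.castSucc (Fin.last N))

/-- The element `c_{k,n} = ∑_{i=1}^{n} (i,…,n) · J_{n-1}ᵏ · (n,…,i)` of
`k[S_n]` (`n = N+1`), the sum over the coset representatives `(i,…,n)` of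
`S_{n-1} ⊂ S_n` of the conjugates of the `k`-th power of `J_{n-1}`. -/
noncomputable def cElt (k : Type) [CommRing k] (N kk : ℕ) :
    MonoidAlgebra k (Perm (Fin (N + 1))) :=
  ∑ j : Fin (N + 1),
    MonoidAlgebra.of k (Perm (Fin (N + 1))) (cyc N j) * jmLast k N ^ kk *
      MonoidAlgebra.of k (Perm (Fin (N + 1))) (cyc N j)⁻¹

lemma cyc_succ (N j : ℕ) (h : j < N) : cyc N j = adjT N j * cyc N (j + 1) := by
  unfold cyc
  have hd : N - j = (N - (j + 1)) + 1 := by omega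
  rw [hd, List.range_succ_eq_map, List.map_cons, List.prod_cons, List.map_map]
  rw [show j + 0 = j from rfl]
  congr 1
  apply congrArg
  apply List.map_congr_left
  intro m _
  simp only [Function.comp]
  congr 1
  omega

lemma cyc_last (N : ℕ) : ∀ d j (_ : j ≤ N) (_ : N - j = d),
    cyc N j (Fin.last N) = ⟨j, by omega⟩ := by
  intro d
  induction d with
  | zero =>
    intro j hj hd
    have : j = N := by omega
    subst this
    simp [cyc, Fin.last]
  | succ d ih =>
    intro j hj hd
    have hjN : j < N := by omega
    rw [cyc_succ N j hjN]
    have h2 := ih (j + 1) (by omega) (by omega)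
    simp only [Perm.mul_apply, h2]
    simp only [adjT, dif_pos (show j + 1 < N + 1 by omega)]
    exact Equiv.swap_apply_right _ _

section Main

variable (k : Type) [CommRing k] (N : ℕ)

local notation "G" => Equiv.Perm (Fin (N + 1))
local notation "og" => MonoidAlgebra.of k (Equiv.Perm (Fin (N + 1)))

/-- Expansion of `cElt k N 1` as a sum over erased transposition pairs. -/
lemma cElt_one_eq_T :
    cElt k N 1 = ∑ j : Fin (N + 1), ∑ y ∈ Finset.univ.erase j, og (Equiv.swap y j) := by
  unfold cElt jmLast
  rw [pow_one]
  refine Finset.sum_congr rfl fun j _ => ?_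
  rw [Finset.mul_sum, Finset.sum_mul]
  simp only [← map_mul]
  have hlast : cyc N (j : ℕ) (Fin.last N) = j := by
    rw [cyc_last N (N - j) j (by omega) rfl]
  have hterm : ∀ p : Fin N,
      cyc N (j : ℕ) * Equiv.swap p.castSucc (Fin.last N) * (cyc N (j : ℕ))⁻¹ =
        Equiv.swap (cyc N (j : ℕ) p.castSucc) j := by
    intro p
    rw [← Equiv.swap_apply_apply, hlast]
  simp only [hterm]
  have hinj : Function.Injective fun p : Fin N => cyc N (j : ℕ) p.castSucc := by
    intro a b hab
    exact Fin.castSucc_injective N ((cyc N (j : ℕ)).injective hab)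
  have himg : (Finset.univ.image fun p : Fin N => cyc N (j : ℕ) p.castSucc) =
      Finset.univ.erase j := by
    apply Finset.eq_of_subset_of_card_le
    · intro y hy
      simp only [Finset.mem_image, Finset.mem_univ, true_and] at hy
      obtain ⟨p, rfl⟩ := hy
      refine Finset.mem_erase.2 ⟨?_, Finset.mem_univ _⟩
      intro h
      exact (ne_of_lt (Fin.castSucc_lt_last p))
        ((cyc N (j : ℕ)).injective (h.trans hlast.symm))
    · rw [Finset.card_erase_of_mem (Finset.mem_univ _),
        Finset.card_image_of_injective _ hinj]
      simp
  rw [← himg, Finset.sum_image fun a _ b _ h => hinj h]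

lemma sum_swap_central (g : G) :
    (∑ q : Fin (N + 1), ∑ p : Fin (N + 1), og (Equiv.swap p q)) * og g =
      og g * ∑ q : Fin (N + 1), ∑ p : Fin (N + 1), og (Equiv.swap p q) := by
  simp only [Finset.sum_mul, Finset.mul_sum, ← map_mul]
  have key : ∀ p q : Fin (N + 1),
      g * Equiv.swap p q = Equiv.swap (g p) (g q) * g := by
    intro p q
    rw [Equiv.swap_apply_apply, inv_mul_cancel_right]
  simp only [key]
  refine Fintype.sum_equiv g⁻¹ _ _ fun q => ?_
  refine Fintype.sum_equiv g⁻¹ _ _ fun p => ?_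
  simp

end Main

section Main2

variable (k : Type) [CommRing k] (N : ℕ)

local notation "og" => MonoidAlgebra.of k (Equiv.Perm (Fin (N + 1)))

lemma T_eq_two_S :
    (∑ j : Fin (N + 1), ∑ y ∈ Finset.univ.erase j, og (Equiv.swap y j)) =
      2 • ∑ q : Fin (N + 1), ∑ p ∈ Finset.univ.filter (· < q), og (Equiv.swap p q) := by
  have hsplit : ∀ j : Fin (N + 1),
      (∑ y ∈ Finset.univ.erase j, og (Equiv.swap y j)) =
        (∑ y ∈ Finset.univ.filter (· < j), og (Equiv.swap y j)) +
          ∑ y ∈ Finset.univ.filter (j < ·), og (Equiv.swap y j) := by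
    intro j
    rw [show Finset.univ.erase j = Finset.univ.filter (· ≠ j) from
      (Finset.filter_ne' _ _).symm]
    rw [Finset.sum_filter, Finset.sum_filter, Finset.sum_filter,
      ← Finset.sum_add_distrib]
    refine Finset.sum_congr rfl fun y _ => ?_
    rcases lt_trichotomy y j with h | h | h
    · simp [h, ne_of_lt h, lt_asymm h]
    · simp [h]
    · simp [h, (ne_of_lt h).symm, lt_asymm h]
  simp only [hsplit, Finset.sum_add_distrib]
  have hswap2 : (∑ j : Fin (N + 1), ∑ y ∈ Finset.univ.filter (j < ·), og (Equiv.swap y j))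
      = ∑ q : Fin (N + 1), ∑ p ∈ Finset.univ.filter (· < q), og (Equiv.swap p q) := by
    simp only [Finset.sum_filter]
    rw [Finset.sum_comm]
    refine Finset.sum_congr rfl fun q _ => Finset.sum_congr rfl fun p _ => ?_
    rcases lt_or_ge p q with h | h
    · simp [h, Equiv.swap_comm]
    · simp [not_lt.2 h]
  rw [hswap2, two_smul]

lemma U_eq :
    (∑ q : Fin (N + 1), ∑ p : Fin (N + 1), og (Equiv.swap p q)) =
      (∑ j : Fin (N + 1), ∑ y ∈ Finset.univ.erase j, og (Equiv.swap y j)) +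
        (N + 1) • (1 : MonoidAlgebra k (Equiv.Perm (Fin (N + 1)))) := by
  have h : ∀ q : Fin (N + 1),
      (∑ p : Fin (N + 1), og (Equiv.swap p q)) =
        (∑ y ∈ Finset.univ.erase q, og (Equiv.swap y q)) + 1 := by
    intro q
    rw [← Finset.sum_erase_add _ _ (Finset.mem_univ q)]
    congr 1
    rw [Equiv.swap_self]
    exact map_one _
  simp only [h, Finset.sum_add_distrib]
  congr 1
  rw [Finset.sum_const, Finset.card_univ, Fintype.card_fin]

end Main2

/-- For `n = N+1 ≥ 1`:
`c_{1,n} = ∑_{i=1}^{n} (i,…,n) · J_{n-1} · (n,…,i)` equals twice the sum of all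
transpositions of `S_n`; in particular it is central in `k[S_n]`.  Moreover
`c_{0,n} = ∑_{i=1}^{n} (i,…,n)(n,…,i) = n · 1`. -/
theorem cElt_one_and_zero (k : Type) [CommRing k] (N : ℕ) :
    cElt k N 1 =
        2 • ∑ q : Fin (N + 1), ∑ p ∈ Finset.univ.filter (· < q),
          MonoidAlgebra.of k (Perm (Fin (N + 1))) (Equiv.swap p q) ∧
      (∀ x : MonoidAlgebra k (Perm (Fin (N + 1))),
        cElt k N 1 * x = x * cElt k N 1) ∧
      cElt k N 0 = (N + 1) • (1 : MonoidAlgebra k (Perm (Fin (N + 1)))) := by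
  refine ⟨(cElt_one_eq_T k N).trans (T_eq_two_S k N), ?_, ?_⟩
  · -- centrality
    have hsub : cElt k N 1 =
        (∑ q : Fin (N + 1), ∑ p : Fin (N + 1),
            MonoidAlgebra.of k (Perm (Fin (N + 1))) (Equiv.swap p q)) -
          (N + 1) • 1 := by
      rw [U_eq, ← cElt_one_eq_T]
      abel
    have hUc : ∀ x : MonoidAlgebra k (Perm (Fin (N + 1))),
        (∑ q : Fin (N + 1), ∑ p : Fin (N + 1),
            MonoidAlgebra.of k (Perm (Fin (N + 1))) (Equiv.swap p q)) * x =
          x * ∑ q : Fin (N + 1), ∑ p : Fin (N + 1),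
            MonoidAlgebra.of k (Perm (Fin (N + 1))) (Equiv.swap p q) := by
      intro x
      refine MonoidAlgebra.induction_on
        (motive := fun y => (∑ q : Fin (N + 1), ∑ p : Fin (N + 1),
            MonoidAlgebra.of k (Perm (Fin (N + 1))) (Equiv.swap p q)) * y =
          y * ∑ q : Fin (N + 1), ∑ p : Fin (N + 1),
            MonoidAlgebra.of k (Perm (Fin (N + 1))) (Equiv.swap p q))
        x (fun g => sum_swap_central k N g) ?_ ?_
      · intro f g hf hg
        rw [mul_add, add_mul, hf, hg]
      · intro r f hf
        rw [mul_smul_comm, hf, smul_mul_assoc]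
    intro x
    rw [hsub, sub_mul, mul_sub, hUc x, smul_mul_assoc, one_mul, mul_smul_comm, mul_one]
  · -- c_{0,n}
    unfold cElt
    simp only [pow_zero, mul_one, ← map_mul, mul_inv_cancel, map_one]
    rw [Finset.sum_const, Finset.card_univ, Fintype.card_fin]
end

section
/- For each k ≥ 0 and n ≥ 1, the element c_{k,n} := Σ_{i=1}^n (i, i+1, …, n)·J_{n-1}^k·(n, n-1, …, i) lies in the center of the group algebra k[S_n], where J_{n-1} = Σ_{j=1}^{n-1} (j, n). -/
open Equiv MonoidAlgebra

lemma cycAux (N : ℕ) : ∀ d j, ∀ _hd : j + d = N,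
    (((List.range d).map fun m => adjT N (j + m)).prod) (Fin.last N)
      = ⟨j, by omega⟩ := by
  intro d
  induction d with
  | zero =>
    intro j hj
    simp only [List.range_zero, List.map_nil, List.prod_nil, Perm.one_apply]
    apply Fin.ext
    simp only [Fin.val_last]
    omega
  | succ d ih =>
    intro j hj
    rw [List.range_succ_eq_map]
    simp only [List.map_cons, List.map_map, List.prod_cons]
    have hrw : ((List.range d).map ((fun m => adjT N (j + m)) ∘ Nat.succ)).prod
        = ((List.range d).map (fun m => adjT N ((j+1) + m))).prod := by
      congr 1
      apply List.map_congr_left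
      intro m _
      simp only [Function.comp]
      congr 1
      omega
    rw [Perm.mul_apply, hrw, ih (j+1) (by omega)]
    have h1 : j + 1 < N + 1 := by omega
    simp only [adjT, dif_pos h1, add_zero]
    exact Equiv.swap_apply_right _ _

lemma cyc_last_s17 (N : ℕ) (j : Fin (N + 1)) : cyc N ↑j (Fin.last N) = j := by
  have := cycAux N (N - ↑j) ↑j (by omega)
  rw [cyc, this]

lemma jm_eq (k : Type) [CommRing k] (N : ℕ) :
    jmLast k N = ∑ x ∈ Finset.univ.erase (Fin.last N),
      MonoidAlgebra.of k (Perm (Fin (N + 1))) (Equiv.swap x (Fin.last N)) := by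
  have h1 := Finset.sum_erase_add Finset.univ
    (fun x => MonoidAlgebra.of k (Perm (Fin (N + 1))) (Equiv.swap x (Fin.last N)))
    (Finset.mem_univ (Fin.last N))
  have h2 := Fin.sum_univ_castSucc
    (fun x => MonoidAlgebra.of k (Perm (Fin (N + 1))) (Equiv.swap x (Fin.last N)))
  rw [jmLast]
  simp only [Equiv.swap_self] at h1 h2
  have := h1.trans h2
  exact (add_right_cancel this).symm

lemma conj_jm (k : Type) [CommRing k] (N : ℕ) (h : Perm (Fin (N + 1)))
    (hh : h (Fin.last N) = Fin.last N) :
    MonoidAlgebra.of k (Perm (Fin (N + 1))) h * jmLast k N *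
      MonoidAlgebra.of k (Perm (Fin (N + 1))) h⁻¹ = jmLast k N := by
  rw [jm_eq, Finset.mul_sum, Finset.sum_mul]
  have key : ∀ x : Fin (N+1),
      MonoidAlgebra.of k (Perm (Fin (N + 1))) h *
        MonoidAlgebra.of k (Perm (Fin (N + 1))) (Equiv.swap x (Fin.last N)) *
        MonoidAlgebra.of k (Perm (Fin (N + 1))) h⁻¹
      = MonoidAlgebra.of k (Perm (Fin (N + 1))) (Equiv.swap (h x) (Fin.last N)) := by
    intro x
    have e := Equiv.swap_apply_apply h x (Fin.last N)
    rw [hh] at e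
    rw [← map_mul, ← map_mul, e]
  simp only [key]
  refine Finset.sum_equiv h ?_ ?_
  · intro x
    simp only [Finset.mem_erase, Finset.mem_univ, and_true]
    constructor
    · intro hx hc
      exact hx (by rw [← hh] at hc; exact h.injective hc)
    · intro hx hc
      exact hx (by rw [hc, hh])
  · intro x _
    rfl

lemma ofConjPow (k : Type) [CommRing k] (N : ℕ) (u : Perm (Fin (N + 1)))
    (b : MonoidAlgebra k (Perm (Fin (N + 1)))) (kk : ℕ) :
    MonoidAlgebra.of k (Perm (Fin (N + 1))) u * b ^ kk *
      MonoidAlgebra.of k (Perm (Fin (N + 1))) u⁻¹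
    = (MonoidAlgebra.of k (Perm (Fin (N + 1))) u * b *
        MonoidAlgebra.of k (Perm (Fin (N + 1))) u⁻¹) ^ kk := by
  induction kk with
  | zero => simp only [pow_zero, mul_one, ← map_mul, mul_inv_cancel, map_one]
  | succ n ih =>
    rw [pow_succ, pow_succ, ← ih]
    have hinv : MonoidAlgebra.of k (Perm (Fin (N + 1))) u⁻¹ *
        MonoidAlgebra.of k (Perm (Fin (N + 1))) u = 1 := by
      rw [← map_mul, inv_mul_cancel, map_one]
    calc MonoidAlgebra.of k (Perm (Fin (N + 1))) u * b ^ (n + 1) *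
        MonoidAlgebra.of k (Perm (Fin (N + 1))) u⁻¹
        = MonoidAlgebra.of k (Perm (Fin (N + 1))) u * b ^ n * 1 *
          (b * MonoidAlgebra.of k (Perm (Fin (N + 1))) u⁻¹) := by
          rw [mul_one, pow_succ]; noncomm_ring
      _ = MonoidAlgebra.of k (Perm (Fin (N + 1))) u * b ^ n *
          (MonoidAlgebra.of k (Perm (Fin (N + 1))) u⁻¹ *
            MonoidAlgebra.of k (Perm (Fin (N + 1))) u) *
          (b * MonoidAlgebra.of k (Perm (Fin (N + 1))) u⁻¹) := by rw [hinv]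
      _ = _ := by noncomm_ring

lemma conj_cElt (k : Type) [CommRing k] (N kk : ℕ) (g : Perm (Fin (N + 1))) :
    MonoidAlgebra.of k (Perm (Fin (N + 1))) g * cElt k N kk
      = cElt k N kk * MonoidAlgebra.of k (Perm (Fin (N + 1))) g := by
  have main : MonoidAlgebra.of k (Perm (Fin (N + 1))) g * cElt k N kk *
      MonoidAlgebra.of k (Perm (Fin (N + 1))) g⁻¹ = cElt k N kk := by
    rw [cElt, Finset.mul_sum, Finset.sum_mul]
    have term : ∀ j : Fin (N + 1),
        MonoidAlgebra.of k (Perm (Fin (N + 1))) g *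
          (MonoidAlgebra.of k (Perm (Fin (N + 1))) (cyc N ↑j) * jmLast k N ^ kk *
            MonoidAlgebra.of k (Perm (Fin (N + 1))) (cyc N ↑j)⁻¹) *
          MonoidAlgebra.of k (Perm (Fin (N + 1))) g⁻¹
        = MonoidAlgebra.of k (Perm (Fin (N + 1))) (cyc N ↑(g j)) * jmLast k N ^ kk *
            MonoidAlgebra.of k (Perm (Fin (N + 1))) (cyc N ↑(g j))⁻¹ := by
      intro j
      set π := cyc N (↑j : ℕ) with hπ
      set π' := cyc N (↑(g j) : ℕ) with hπ'
      obtain ⟨h, hgπ⟩ : ∃ h, g * π = π' * h := ⟨π'⁻¹ * (g * π), by group⟩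
      have hdef : h = π'⁻¹ * (g * π) := by rw [hgπ]; group
      have hfix : h (Fin.last N) = Fin.last N := by
        have h1 : π (Fin.last N) = j := cyc_last_s17 N j
        have h2 : π' (Fin.last N) = g j := cyc_last_s17 N (g j)
        rw [hdef]
        simp only [Perm.mul_apply, h1]
        rw [← h2]; exact π'.symm_apply_apply _
      have hcj := conj_jm k N h hfix
      have hcp := ofConjPow k N h (jmLast k N) kk
      rw [hcj] at hcp
      calc MonoidAlgebra.of k (Perm (Fin (N + 1))) g *
          (MonoidAlgebra.of k (Perm (Fin (N + 1))) π * jmLast k N ^ kk *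
            MonoidAlgebra.of k (Perm (Fin (N + 1))) π⁻¹) *
          MonoidAlgebra.of k (Perm (Fin (N + 1))) g⁻¹
          = MonoidAlgebra.of k (Perm (Fin (N + 1))) (g * π) * jmLast k N ^ kk *
            MonoidAlgebra.of k (Perm (Fin (N + 1))) (g * π)⁻¹ := by
            rw [mul_inv_rev, map_mul, map_mul]
            noncomm_ring
        _ = MonoidAlgebra.of k (Perm (Fin (N + 1))) π' *
            (MonoidAlgebra.of k (Perm (Fin (N + 1))) h * jmLast k N ^ kk *
              MonoidAlgebra.of k (Perm (Fin (N + 1))) h⁻¹) *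
            MonoidAlgebra.of k (Perm (Fin (N + 1))) π'⁻¹ := by
            rw [hgπ, mul_inv_rev, map_mul, map_mul]
            simp only [mul_assoc]
        _ = _ := by rw [hcp]
    simp only [term]
    exact Equiv.sum_comp g (fun i => MonoidAlgebra.of k (Perm (Fin (N + 1))) (cyc N ↑i)
      * jmLast k N ^ kk * MonoidAlgebra.of k (Perm (Fin (N + 1))) (cyc N ↑i)⁻¹)
  have hinv : MonoidAlgebra.of k (Perm (Fin (N + 1))) g⁻¹ *
      MonoidAlgebra.of k (Perm (Fin (N + 1))) g = 1 := by
    rw [← map_mul, inv_mul_cancel, map_one]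
  calc MonoidAlgebra.of k (Perm (Fin (N + 1))) g * cElt k N kk
      = MonoidAlgebra.of k (Perm (Fin (N + 1))) g * cElt k N kk *
        (MonoidAlgebra.of k (Perm (Fin (N + 1))) g⁻¹ *
          MonoidAlgebra.of k (Perm (Fin (N + 1))) g) := by rw [hinv, mul_one]
    _ = (MonoidAlgebra.of k (Perm (Fin (N + 1))) g * cElt k N kk *
        MonoidAlgebra.of k (Perm (Fin (N + 1))) g⁻¹) *
        MonoidAlgebra.of k (Perm (Fin (N + 1))) g := by noncomm_ring
    _ = cElt k N kk * MonoidAlgebra.of k (Perm (Fin (N + 1))) g := by rw [main]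

/-- For each `kk ≥ 0` and `n = N+1 ≥ 1`, the element
`c_{kk,n} = ∑_{i=1}^{n} (i,…,n) · J_{n-1}^{kk} · (n,…,i)` lies in the center of
the group algebra `k[S_n]`. -/
theorem cElt_central (k : Type) [CommRing k] (N kk : ℕ)
    (x : MonoidAlgebra k (Perm (Fin (N + 1)))) :
    cElt k N kk * x = x * cElt k N kk := by
  induction x using MonoidAlgebra.induction_linear with
  | zero => simp
  | add f g hf hg => rw [mul_add, add_mul, hf, hg]
  | single g r =>
    have : (MonoidAlgebra.single g r : MonoidAlgebra k (Perm (Fin (N + 1))))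
        = r • MonoidAlgebra.of k (Perm (Fin (N + 1))) g := by
      rw [MonoidAlgebra.of_apply, MonoidAlgebra.smul_single', mul_one]
    rw [this, mul_smul_comm, smul_mul_assoc, conj_cElt]
end

section
/- Let λ range over partitions and suppose, in the Heisenberg algebra H_ℤ, y = Σ_{λ,μ} y_{λ,μ} b_μ a_λ is a nonzero element (finite sum, y_{λ,μ} ∈ ℤ), where {b_μ a_λ} is the standard basis. If k is minimal with y_{λ,μ} ≠ 0 for some λ with |λ| = k, then there exist ν with |ν| = k and μ with y_{ν,μ} ≠ 0, and the element Σ_μ y_{ν,μ} s_{μ*} of the ring of symmetric functions is nonzero (where s denotes Schur functions and μ* the conjugate partition). Consequently the map γ : H_ℤ → K_0(H) defined via the action on ⊕_n K_0(k[S_n]) is injective. -/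
/-- A partition, encoded as a weakly increasing list of positive integers. -/
def IsPartitionList (l : List ℕ) : Prop :=
  l.Pairwise (· ≤ ·) ∧ ∀ x ∈ l, 1 ≤ x

/-- The conjugate (dual) partition `μ*` of a partition (encoded as a list):
the `i`-th column length is the number of parts `> i`; the result is again
recorded as a weakly increasing list. -/
def conjPart (l : List ℕ) : List ℕ :=
  ((List.range (l.foldr max 0)).map fun i => l.countP fun x => decide (i < x)).reverse

lemma le_foldr_max {l : List ℕ} {x : ℕ} (hx : x ∈ l) : x ≤ l.foldr max 0 := by
  induction l with
  | nil => simp at hx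
  | cons a t ih =>
    rcases List.mem_cons.1 hx with h | h
    · subst h; simp [List.foldr_cons]
    · have := ih h; simp [List.foldr_cons]; omega

lemma exists_gt_of_lt_foldr_max {l : List ℕ} {i : ℕ} (h : i < l.foldr max 0) :
    ∃ x ∈ l, i < x := by
  induction l with
  | nil => simp at h
  | cons a t ih =>
    simp only [List.foldr_cons] at h
    rcases Nat.lt_or_ge i a with h' | h'
    · exact ⟨a, List.mem_cons_self, h'⟩
    · have : i < t.foldr max 0 := by omega
      obtain ⟨x, hx, hx'⟩ := ih this
      exact ⟨x, List.mem_cons_of_mem _ hx, hx'⟩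

lemma countP_lt_succ (l : List ℕ) (n : ℕ) :
    (l.countP fun x => decide (n < x)) =
      l.count (n+1) + l.countP fun x => decide (n+1 < x) := by
  induction l with
  | nil => simp
  | cons a t ih =>
    simp only [List.countP_cons, List.count_cons, ih]
    rcases Nat.lt_trichotomy a (n+1) with h | h | h
    · have h1 : ¬ (n < a) := by omega
      have h2 : ¬ (n+1 < a) := by omega
      simp [h1, h2, Nat.ne_of_lt h]
    · subst h; simp; omega
    · have h1 : n < a := by omega
      simp [h1, h, Nat.ne_of_gt h]; omega

lemma conjPart_isPartitionList {l : List ℕ} (hl : IsPartitionList l) :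
    IsPartitionList (conjPart l) := by
  constructor
  · unfold conjPart
    rw [List.pairwise_reverse, List.pairwise_map]
    refine (List.pairwise_lt_range (n := _)).imp ?_
    intro i j hij
    exact List.countP_mono_left fun x _ h => by
      simp only [decide_eq_true_eq] at *; omega
  · intro x hx
    simp only [conjPart, List.mem_reverse, List.mem_map, List.mem_range] at hx
    obtain ⟨i, hi, rfl⟩ := hx
    obtain ⟨a, ha, ha'⟩ := exists_gt_of_lt_foldr_max hi
    exact List.countP_pos_iff.2 ⟨a, ha, by simpa using ha'⟩

lemma conjPart_injOn {l l' : List ℕ} (hl : IsPartitionList l) (hl' : IsPartitionList l')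
    (h : conjPart l = conjPart l') : l = l' := by
  have hM : l.foldr max 0 = l'.foldr max 0 := by
    have := congrArg List.length h
    simpa [conjPart] using this
  have hmap := List.reverse_injective h
  have hf : ∀ i, (l.countP fun x => decide (i < x)) = l'.countP fun x => decide (i < x) := by
    intro i
    rcases Nat.lt_or_ge i (l.foldr max 0) with hi | hi
    · have h1 : ((List.range (l.foldr max 0)).map fun i => l.countP fun x => decide (i < x))[i]'(by simpa using hi)
          = ((List.range (l'.foldr max 0)).map fun i => l'.countP fun x => decide (i < x))[i]'(by simp; omega) :=
        List.getElem_of_eq hmap _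
      simpa using h1
    · have e1 : (l.countP fun x => decide (i < x)) = 0 :=
        List.countP_eq_zero.2 fun x hx => by
          have := le_foldr_max hx; simp; omega
      have e2 : (l'.countP fun x => decide (i < x)) = 0 :=
        List.countP_eq_zero.2 fun x hx => by
          have := le_foldr_max (l := l') hx; rw [← hM] at this; simp; omega
      rw [e1, e2]
  have hcount : ∀ n, l.count n = l'.count n := by
    intro n
    cases n with
    | zero =>
      have e1 : l.count 0 = 0 := by
        rw [List.count_eq_zero]; intro h0; have := hl.2 0 h0; omega
      have e2 : l'.count 0 = 0 := by
        rw [List.count_eq_zero]; intro h0; have := hl'.2 0 h0; omega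
      rw [e1, e2]
    | succ n =>
      have c1 := countP_lt_succ l n
      have c2 := countP_lt_succ l' n
      have := hf n
      have := hf (n+1)
      omega
  exact (List.perm_iff_count.2 hcount).eq_of_pairwise' hl.1 hl'.1

/-- Suppose `y = ∑_{λ,μ} y_{λ,μ} b_μ a_λ` is a nonzero element
of the integral Heisenberg ring `H_ℤ`, written in the standard basis
`{b_μ a_λ}` indexed by pairs of partitions.  Let `κ` be minimal such that
`y_{λ,μ} ≠ 0` for some `λ` with `|λ| = κ`.  Then there are `ν` with `|ν| = κ`
and `μ` with `y_{ν,μ} ≠ 0`, and — for any family `s` of "Schur functions" in a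
commutative ring which is linearly independent over `ℤ` when restricted to
partitions — the element `∑_μ y_{ν,μ} s_{μ*}` is nonzero.  (This is the key
step showing that the map `γ : H_ℤ → K₀(𝒽)`, defined via the action on
`⊕ₙ K₀(k[Sₙ])`, is injective.) -/
theorem heisZ_gamma_injective_key
    (Sym : Type) [CommRing Sym] (s : List ℕ → Sym)
    (hs : LinearIndependent ℤ fun l : {l : List ℕ // IsPartitionList l} => s l.1)
    (y : (List ℕ × List ℕ) →₀ ℤ)
    (hsupp : ∀ p ∈ y.support, IsPartitionList p.1 ∧ IsPartitionList p.2)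
    (hy : (y.sum fun p c => c • normalMonomial (p.2, p.1)) ≠ (0 : HeisZ))
    (κ : ℕ)
    (hκ : IsLeast {k' : ℕ | ∃ p ∈ y.support, p.1.sum = k'} κ) :
    ∃ ν : List ℕ, IsPartitionList ν ∧ ν.sum = κ ∧
      (∃ μ : List ℕ, y (ν, μ) ≠ 0) ∧
      (y.sum fun p c => if p.1 = ν then c • s (conjPart p.2) else 0) ≠ 0 := by
  obtain ⟨⟨p₀, hp₀s, hp₀k⟩, _⟩ := hκ
  refine ⟨p₀.1, (hsupp p₀ hp₀s).1, hp₀k, ⟨p₀.2, by simpa using Finsupp.mem_support_iff.1 hp₀s⟩, ?_⟩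
  intro h0
  set ν := p₀.1 with hν
  set F := y.support.filter (fun p => p.1 = ν) with hF
  have hsum : (y.sum fun p c => if p.1 = ν then c • s (conjPart p.2) else 0)
      = ∑ p ∈ F, y p • s (conjPart p.2) := by
    rw [Finsupp.sum, Finset.sum_filter]
  rw [hsum] at h0
  -- index map into partitions
  have hmem : ∀ p : F, IsPartitionList (conjPart p.val.2) := by
    intro p
    exact conjPart_isPartitionList (hsupp p.1 (Finset.mem_of_mem_filter _ p.property)).2
  set v : F → {l : List ℕ // IsPartitionList l} := fun p => ⟨conjPart p.val.2, hmem p⟩ with hv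
  have hinj : Function.Injective v := by
    intro p q hpq
    have hp := Finset.mem_filter.1 p.property
    have hq := Finset.mem_filter.1 q.property
    have h2 : p.val.2 = q.val.2 :=
      conjPart_injOn (hsupp _ hp.1).2 (hsupp _ hq.1).2 (by simpa [hv] using congrArg Subtype.val hpq)
    have h1 : p.val.1 = q.val.1 := hp.2.trans hq.2.symm
    exact Subtype.ext (Prod.ext h1 h2)
  have li : LinearIndependent ℤ fun p : F => s (conjPart p.val.2) := hs.comp v hinj
  have h0' : ∑ p : F, y p.val • s (conjPart p.val.2) = 0 := by
    rw [← h0]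
    exact Finset.sum_attach F (fun p => y p • s (conjPart p.2))
  have hp₀F : p₀ ∈ F := Finset.mem_filter.2 ⟨hp₀s, rfl⟩
  have := Fintype.linearIndependent_iff.1 li (fun p => y p.val) h0' ⟨p₀, hp₀F⟩
  exact Finsupp.mem_support_iff.1 hp₀s this
end
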